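/- Let t : {0,1}^* → {a,b} be a tree and N ∈ ℕ such that every node n ∈ {0,1}^* has a strict descendant n' with |n'| ≤ |n| + N and t(n') ≠ t(n). Then for μ-almost every branch b ∈ {0,1}^ℕ, infinitely many prefixes of b are labelled a by t and infinitely many prefixes of b are labelled b by t. -/

import Mathlib

open MeasureTheory

/-- The cylinder of a finite binary word `w`: the set of branches of the infinite
binary tree that visit the node `w`, i.e. have `w` as a prefix. -/
def cylinder (w : List Bool) : Set (ℕ → Bool) :=
  {b | ∀ i : Fin w.length, b i = w.get i}

/-- `μ` is the uniform probability measure on the space of branches of the infinite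
binary tree: the infinite product of fair-coin Bernoulli(1/2) measures. -/
def IsUniformBernoulli (μ : Measure (ℕ → Bool)) : Prop :=
  IsProbabilityMeasure μ ∧ ∀ w : List Bool, μ (cylinder w) = (2 : ENNReal)⁻¹ ^ w.length

/-- The length-`k` prefix of a branch `b`. -/
def branchPrefix (b : ℕ → Bool) (k : ℕ) : List Bool :=
  List.ofFn fun i : Fin k => b i


lemma cylinder_measurableSet (w : List Bool) : MeasurableSet (_root_.cylinder w) := by
  have : _root_.cylinder w = ⋂ i : Fin w.length, (fun b : ℕ → Bool => b i) ⁻¹' {w.get i} := by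
    ext b; simp [_root_.cylinder]
  rw [this]
  exact MeasurableSet.iInter fun i => (measurable_pi_apply _) (measurableSet_singleton _)

lemma mem_cyl {w : List Bool} {b : ℕ → Bool} :
    b ∈ _root_.cylinder w ↔ ∀ i, ∀ hi : i < w.length, b i = w[i] := by
  constructor
  · intro hb i hi; simpa using hb ⟨i, hi⟩
  · intro hb i; simpa using hb i i.2

@[simp] lemma branchPrefix_length (b : ℕ → Bool) (k : ℕ) : (branchPrefix b k).length = k := by
  simp [branchPrefix]

lemma branchPrefix_getElem (b : ℕ → Bool) {k i : ℕ} (h : i < (branchPrefix b k).length) :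
    (branchPrefix b k)[i] = b i := by
  simp [branchPrefix]

lemma branchPrefix_take (b : ℕ → Bool) {j k : ℕ} (h : j ≤ k) :
    (branchPrefix b k).take j = branchPrefix b j := by
  apply List.ext_getElem
  · simp; omega
  · intro i h1 h2
    rw [List.getElem_take, branchPrefix_getElem, branchPrefix_getElem]

lemma mem_cyl_iff_branchPrefix {w : List Bool} {b : ℕ → Bool} :
    b ∈ _root_.cylinder w ↔ branchPrefix b w.length = w := by
  rw [mem_cyl]
  constructor
  · intro hb
    apply List.ext_getElem (by simp)
    intro i h1 h2
    rw [branchPrefix_getElem]; exact hb i h2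
  · intro hb i hi
    have h2 : i < (branchPrefix b w.length).length := by simpa using hi
    calc b i = (branchPrefix b w.length)[i] := (branchPrefix_getElem b h2).symm
      _ = w[i] := List.getElem_of_eq hb h2

lemma cylinder_subset_of_prefix {u v : List Bool} (hp : u <+: v) :
    _root_.cylinder v ⊆ _root_.cylinder u := by
  obtain ⟨s, rfl⟩ := hp
  intro b hb
  rw [mem_cyl] at hb ⊢
  intro i hi
  rw [hb i (by simp; omega), List.getElem_append_left hi]

lemma cylinder_disjoint {L : ℕ} {f g : Fin L → Bool} (hfg : f ≠ g) :
    Disjoint (_root_.cylinder (List.ofFn f)) (_root_.cylinder (List.ofFn g)) := by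
  rw [Set.disjoint_left]
  intro b hbf hbg
  rw [mem_cyl] at hbf hbg
  apply hfg
  funext i
  have h1 := hbf i (by simpa using i.2)
  have h2 := hbg i (by simpa using i.2)
  simp only [List.getElem_ofFn] at h1 h2
  simp at h1 h2
  rw [← h1, ← h2]

/-- Branches whose label never changes within blocks `m, m+1, ..., m+r-1`. -/
def BadBr (t : List Bool → Bool) (N m r : ℕ) : Set (ℕ → Bool) :=
  {b | ∀ k, m ≤ k → k < m + r → ∀ j, k * N < j → j ≤ (k + 1) * N →
    t (branchPrefix b j) = t (branchPrefix b (k * N))}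

open Classical in
/-- Words of length `(m+r)*N` whose label never changes within blocks `m..m+r-1`. -/
noncomputable def badS (t : List Bool → Bool) (N m r : ℕ) :
    Finset (Fin ((m + r) * N) → Bool) :=
  Finset.univ.filter fun f => ∀ k, m ≤ k → k < m + r → ∀ j, k * N < j → j ≤ (k + 1) * N →
    t ((List.ofFn f).take j) = t ((List.ofFn f).take (k * N))

lemma badBr_eq_union (t : List Bool → Bool) (N m r : ℕ) :
    BadBr t N m r = ⋃ f ∈ badS t N m r, _root_.cylinder (List.ofFn f) := by
  classical
  ext b
  simp only [Set.mem_iUnion, exists_prop]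
  constructor
  · intro hb
    refine ⟨fun i : Fin ((m + r) * N) => b i, ?_, ?_⟩
    · rw [badS, Finset.mem_filter]
      refine ⟨Finset.mem_univ _, ?_⟩
      intro k hk1 hk2 j hj1 hj2
      have hofn : List.ofFn (fun i : Fin ((m + r) * N) => b i) = branchPrefix b ((m + r) * N) := rfl
      have hjle : j ≤ (m + r) * N := le_trans hj2 (Nat.mul_le_mul_right N (by omega))
      have hkle : k * N ≤ (m + r) * N := Nat.mul_le_mul_right N (by omega)
      rw [hofn, branchPrefix_take b hjle, branchPrefix_take b hkle]
      exact hb k hk1 hk2 j hj1 hj2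
    · show b ∈ _root_.cylinder (branchPrefix b ((m + r) * N))
      rw [mem_cyl_iff_branchPrefix, branchPrefix_length]
  · rintro ⟨f, hfS, hbf⟩
    rw [badS, Finset.mem_filter] at hfS
    have hpre : branchPrefix b ((m + r) * N) = List.ofFn f := by
      have := mem_cyl_iff_branchPrefix.mp hbf
      simpa using this
    intro k hk1 hk2 j hj1 hj2
    have hjle : j ≤ (m + r) * N := le_trans hj2 (Nat.mul_le_mul_right N (by omega))
    have hkle : k * N ≤ (m + r) * N := Nat.mul_le_mul_right N (by omega)
    have := hfS.2 k hk1 hk2 j hj1 hj2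
    rw [← hpre, branchPrefix_take b hjle, branchPrefix_take b hkle] at this
    exact this

lemma badBr_measure (μ : Measure (ℕ → Bool))
    (hC : ∀ w : List Bool, μ (_root_.cylinder w) = (2 : ENNReal)⁻¹ ^ w.length)
    (t : List Bool → Bool) (N m r : ℕ) :
    μ (BadBr t N m r) = (badS t N m r).card * (2 : ENNReal)⁻¹ ^ ((m + r) * N) := by
  rw [badBr_eq_union]
  have hd : Set.PairwiseDisjoint (↑(badS t N m r) : Set (Fin ((m + r) * N) → Bool))
      (fun f => _root_.cylinder (List.ofFn f)) := fun f _ g _ hfg => cylinder_disjoint hfg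
  rw [measure_biUnion_finset hd (fun f _ => cylinder_measurableSet _)]
  rw [Finset.sum_congr rfl (fun f _ => by rw [hC]; try simp)]
  simp [Finset.sum_const, nsmul_eq_mul]

lemma diff_bound (μ : Measure (ℕ → Bool))
    (hC : ∀ w : List Bool, μ (_root_.cylinder w) = (2 : ENNReal)⁻¹ ^ w.length)
    {w v : List Bool} {N : ℕ} (hp : w <+: v) (hlen : v.length ≤ w.length + N) :
    μ (_root_.cylinder w \ _root_.cylinder v)
      ≤ (1 - (2 : ENNReal)⁻¹ ^ N) * (2 : ENNReal)⁻¹ ^ w.length := by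
  rw [measure_diff (cylinder_subset_of_prefix hp) (cylinder_measurableSet v).nullMeasurableSet
    (by rw [hC]; exact ENNReal.pow_ne_top (by simp))]
  rw [hC, hC]
  have h1 : (2 : ENNReal)⁻¹ ^ (w.length + N) ≤ (2 : ENNReal)⁻¹ ^ v.length :=
    pow_le_pow_of_le_one zero_le (by simp [ENNReal.inv_le_one]) hlen
  refine le_trans (tsub_le_tsub_left h1 _) ?_
  rw [ENNReal.sub_mul (fun _ _ => ENNReal.pow_ne_top (by simp)), one_mul, pow_add]
  exact le_of_eq (by ring_nf)

lemma badBr_step (μ : Measure (ℕ → Bool))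
    (hC : ∀ w : List Bool, μ (_root_.cylinder w) = (2 : ENNReal)⁻¹ ^ w.length)
    (t : List Bool → Bool) (N : ℕ)
    (h : ∀ n : List Bool, ∃ n' : List Bool,
      n <+: n' ∧ n' ≠ n ∧ n'.length ≤ n.length + N ∧ t n' ≠ t n)
    (m r : ℕ) :
    μ (BadBr t N m (r + 1)) ≤ (1 - (2 : ENNReal)⁻¹ ^ N) * μ (BadBr t N m r) := by
  classical
  choose wit h1 h2 h3 h4 using h
  set L := (m + r) * N with hL
  -- inclusion
  have key : BadBr t N m (r + 1) ⊆
      ⋃ f ∈ badS t N m r, (_root_.cylinder (List.ofFn f) \ _root_.cylinder (wit (List.ofFn f))) := by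
    intro b hb
    have hb' : b ∈ BadBr t N m r := by
      intro k hk1 hk2 j hj1 hj2
      exact hb k hk1 (by omega) j hj1 hj2
    rw [badBr_eq_union] at hb'
    simp only [Set.mem_iUnion, exists_prop] at hb' ⊢
    obtain ⟨f, hfS, hbf⟩ := hb'
    refine ⟨f, hfS, hbf, ?_⟩
    intro hbw
    set w := List.ofFn f with hw
    have hwlen : w.length = L := by simp [hw, hL]
    have hltlen : L < (wit w).length := by
      rcases Nat.lt_or_ge L (wit w).length with hlt | hge
      · exact hlt
      · exact absurd ((h1 w).eq_of_length (le_antisymm ((h1 w).length_le) (by omega))).symm (h2 w)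
    have hlelen : (wit w).length ≤ (m + r + 1) * N := by
      have := h3 w
      rw [hwlen] at this
      have : (wit w).length ≤ L + N := this
      have hmul : (m + r + 1) * N = L + N := by rw [hL]; ring
      omega
    have hbpw : branchPrefix b L = w := by
      have := mem_cyl_iff_branchPrefix.mp hbf
      rwa [hwlen] at this
    have hbpv : branchPrefix b (wit w).length = wit w := mem_cyl_iff_branchPrefix.mp hbw
    have := hb (m + r) (by omega) (by omega) (wit w).length (by rw [← hL]; omega)
      (by omega)
    rw [hbpv, ← hL, hbpw] at this
    exact h4 w this
  calc μ (BadBr t N m (r + 1))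
      ≤ μ (⋃ f ∈ badS t N m r,
          (_root_.cylinder (List.ofFn f) \ _root_.cylinder (wit (List.ofFn f)))) :=
        measure_mono key
    _ ≤ ∑ f ∈ badS t N m r,
          μ (_root_.cylinder (List.ofFn f) \ _root_.cylinder (wit (List.ofFn f))) :=
        measure_biUnion_finset_le _ _
    _ ≤ ∑ f ∈ badS t N m r, (1 - (2 : ENNReal)⁻¹ ^ N) * (2 : ENNReal)⁻¹ ^ L := by
        refine Finset.sum_le_sum fun f _ => ?_
        have := diff_bound μ hC (h1 (List.ofFn f)) (by simpa using h3 (List.ofFn f))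
        simpa using this
    _ = (1 - (2 : ENNReal)⁻¹ ^ N) * μ (BadBr t N m r) := by
        rw [badBr_measure μ hC, Finset.sum_const, nsmul_eq_mul]
        ring

/-- If in the tree `t` (over the alphabet `{a, b}` encoded as `Bool`) every node
has a strict descendant at depth at most `N` deeper with a different label, then
almost every branch has infinitely many `a`-labelled and infinitely many
`b`-labelled prefixes. -/
theorem stmt_7 (μ : Measure (ℕ → Bool)) (hμ : IsUniformBernoulli μ)
    (t : List Bool → Bool) (N : ℕ)
    (h : ∀ n : List Bool, ∃ n' : List Bool,
      n <+: n' ∧ n' ≠ n ∧ n'.length ≤ n.length + N ∧ t n' ≠ t n) :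
    ∀ᵐ b ∂μ, {k : ℕ | t (branchPrefix b k) = true}.Infinite ∧
      {k : ℕ | t (branchPrefix b k) = false}.Infinite := by
  obtain ⟨hP, hC⟩ := hμ
  haveI : IsProbabilityMeasure μ := hP
  rcases Nat.eq_zero_or_pos N with rfl | hN
  · obtain ⟨n', h1, h2, h3, _⟩ := h []
    exact absurd (List.length_eq_zero_iff.mp (Nat.le_zero.mp h3)) h2
  set c : ENNReal := 1 - (2 : ENNReal)⁻¹ ^ N with hc
  have hc1 : c < 1 := ENNReal.sub_lt_self ENNReal.one_ne_top one_ne_zero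
    (pow_ne_zero _ (by simp))
  have hbound : ∀ m r, μ (BadBr t N m r) ≤ c ^ r := by
    intro m r
    induction r with
    | zero => simpa using prob_le_one
    | succ r ih =>
      calc μ (BadBr t N m (r + 1)) ≤ c * μ (BadBr t N m r) := badBr_step μ hC t N h m r
        _ ≤ c * c ^ r := mul_le_mul_right ih c
        _ = c ^ (r + 1) := (pow_succ' c r).symm
  have hnull : ∀ m, μ (⋂ r, BadBr t N m r) = 0 := by
    intro m
    refine le_antisymm ?_ zero_le
    refine ge_of_tendsto' (ENNReal.tendsto_pow_atTop_nhds_zero_of_lt_one hc1) fun r => ?_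
    exact le_trans (measure_mono (Set.iInter_subset _ r)) (hbound m r)
  have hU : μ (⋃ m, ⋂ r, BadBr t N m r) = 0 := measure_iUnion_null hnull
  filter_upwards [measure_eq_zero_iff_ae_notMem.mp hU] with b hb
  simp only [Set.mem_iUnion, Set.mem_iInter, not_exists, not_forall] at hb
  have main : ∀ M : ℕ, ∃ j1, M ≤ j1 ∧ t (branchPrefix b j1) = true ∧
      ∃ j2, M ≤ j2 ∧ t (branchPrefix b j2) = false := by
    intro M
    obtain ⟨r, hr⟩ := hb M
    have : ¬ (∀ k, M ≤ k → k < M + r → ∀ j, k * N < j → j ≤ (k + 1) * N →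
        t (branchPrefix b j) = t (branchPrefix b (k * N))) := hr
    push_neg at this
    obtain ⟨k, hk1, _, j, hj1, _, hne⟩ := this
    have hMk : M ≤ k * N := le_trans hk1 (Nat.le_mul_of_pos_right k hN)
    have hMj : M ≤ j := le_trans hMk (le_of_lt hj1)
    cases hcase : t (branchPrefix b (k * N)) with
    | true =>
      refine ⟨k * N, hMk, hcase, j, hMj, ?_⟩
      rw [hcase] at hne
      simpa using hne
    | false =>
      refine ⟨j, hMj, ?_, k * N, hMk, hcase⟩
      rw [hcase] at hne
      simpa using hne
  constructor
  · apply Set.infinite_of_not_bddAbove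
    rw [not_bddAbove_iff]
    intro x
    obtain ⟨j1, hj1, ht1, _⟩ := main (x + 1)
    exact ⟨j1, ht1, by omega⟩
  · apply Set.infinite_of_not_bddAbove
    rw [not_bddAbove_iff]
    intro x
    obtain ⟨_, _, _, j2, hj2, ht2⟩ := main (x + 1)
    exact ⟨j2, ht2, by omega⟩
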